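/- Let k ≥ 3 and n ≥ (k−1)(k−2) be integers. Then r(S(n,1); k) ≤ kn + 3. -/

import Mathlib

open SimpleGraph

/-- The double star `S(n,m)`: two adjacent centers `0` and `1`, with `n` leaves
attached to `0` (vertices `2,…,n+1`) and `m` leaves attached to `1`
(vertices `n+2,…,n+m+1`). -/
def doubleStar (n m : ℕ) : SimpleGraph (Fin (n + m + 2)) :=
  SimpleGraph.fromRel (fun u v =>
    (u.val = 0 ∧ v.val = 1) ∨
    (u.val = 0 ∧ 2 ≤ v.val ∧ v.val ≤ n + 1) ∨
    (u.val = 1 ∧ n + 2 ≤ v.val))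

/-- The star `K_{1,n}` with center `0` and `n` leaves. -/
def starGraph (n : ℕ) : SimpleGraph (Fin (n + 1)) :=
  SimpleGraph.fromRel (fun u _ => u.val = 0)

/-- The subdivided star `S_n^m`, obtained from `K_{1,n}` by subdividing `m` edges each
exactly once: center `0`; subdivision vertices `1,…,m`; for `1 ≤ i ≤ m` the vertex `m+i`
is the leaf beyond subdivision vertex `i`; vertices `2m+1,…,n+m` are ordinary leaves. -/
def subdividedStar (n m : ℕ) : SimpleGraph (Fin (n + m + 1)) :=
  SimpleGraph.fromRel (fun u v =>
    (u.val = 0 ∧ 1 ≤ v.val ∧ v.val ≤ m) ∨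
    (1 ≤ u.val ∧ u.val ≤ m ∧ v.val = u.val + m) ∨
    (u.val = 0 ∧ 2 * m + 1 ≤ v.val))

/-- `K_N` colored by `c` with `k` colors contains a monochromatic copy of `H`. -/
def HasMonoCopy {W : Type} (H : SimpleGraph W) {N : ℕ} {α : Type}
    (c : Sym2 (Fin N) → α) : Prop :=
  ∃ (f : W ↪ Fin N) (i : α), ∀ v w : W, H.Adj v w → c s(f v, f w) = i

/-- Every `k`-coloring of the edges of `K_N` contains a monochromatic copy of `H`. -/
def IsRamsey {W : Type} (H : SimpleGraph W) (k N : ℕ) : Prop :=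
  ∀ c : Sym2 (Fin N) → Fin k, HasMonoCopy H c

/-- The `k`-color Ramsey number of `H`. -/
noncomputable def ramseyNumber {W : Type} (H : SimpleGraph W) (k : ℕ) : ℕ :=
  sInf {N | IsRamsey H k N}

/-- There is a list assignment of `k` colors to each edge of `K_N` such that every
coloring from the lists contains a monochromatic copy of `H`. -/
def IsListRamsey {W : Type} (H : SimpleGraph W) (k N : ℕ) : Prop :=
  ∃ L : Sym2 (Fin N) → Finset ℕ, (∀ e, (L e).card = k) ∧
    ∀ c : Sym2 (Fin N) → ℕ, (∀ e, c e ∈ L e) → HasMonoCopy H c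

/-- The `k`-color list Ramsey number of `H`. -/
noncomputable def listRamseyNumber {W : Type} (H : SimpleGraph W) (k : ℕ) : ℕ :=
  sInf {N | IsListRamsey H k N}


namespace DS9

open Finset

variable {n k : ℕ}

/-! ### Basic neighborhood machinery -/

def nbr (c : Sym2 (Fin (k*n+3)) → Fin k) (i : Fin k) (u : Fin (k*n+3)) :
    Finset (Fin (k*n+3)) :=
  univ.filter (fun v => v ≠ u ∧ c s(u, v) = i)

lemma mem_nbr {c : Sym2 (Fin (k*n+3)) → Fin k} {i : Fin k} {u v : Fin (k*n+3)} :
    v ∈ nbr c i u ↔ v ≠ u ∧ c s(u, v) = i := by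
  simp [nbr]

lemma nbr_comm {c : Sym2 (Fin (k*n+3)) → Fin k} {i : Fin k} {u v : Fin (k*n+3)}
    (h : v ∈ nbr c i u) : u ∈ nbr c i v := by
  rw [mem_nbr] at h ⊢
  exact ⟨Ne.symm h.1, by rw [Sym2.eq_swap]; exact h.2⟩

lemma not_mem_nbr_self {c : Sym2 (Fin (k*n+3)) → Fin k} {i : Fin k} {u : Fin (k*n+3)} :
    u ∉ nbr c i u := by
  simp [mem_nbr]

lemma sum_deg (c : Sym2 (Fin (k*n+3)) → Fin k) (u : Fin (k*n+3)) :
    ∑ i : Fin k, (nbr c i u).card = k*n+2 := by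
  have h : ∀ v ∈ univ.erase u, (fun v => c s(u, v)) v ∈ (univ : Finset (Fin k)) := by
    intro v _; simp
  have hfib := Finset.card_eq_sum_card_fiberwise h
  have hcard : (univ.erase u).card = k*n+2 := by
    rw [Finset.card_erase_of_mem (mem_univ u), Finset.card_univ, Fintype.card_fin]
    omega
  rw [hcard] at hfib
  rw [hfib]
  apply Finset.sum_congr rfl
  intro i _
  congr 1
  ext v
  simp [nbr, Finset.mem_erase, and_comm]

/-! ### The embedding of a double star -/

def embFun {α : Type} (u v w : α) (e : Fin n → α) (x : Fin (n+1+2)) : α :=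
  if _h0 : x.val = 0 then u
  else if _h1 : x.val = 1 then v
  else if _h2 : n + 2 ≤ x.val then w
  else e ⟨x.val - 2, by have := x.isLt; omega⟩

variable {α : Type}

lemma embFun_0 (u v w : α) (e : Fin n → α) (x : Fin (n+1+2)) (h : x.val = 0) :
    embFun u v w e x = u := by simp [embFun, h]

lemma embFun_1 (u v w : α) (e : Fin n → α) (x : Fin (n+1+2)) (h : x.val = 1) :
    embFun u v w e x = v := by
  rw [embFun, dif_neg (by omega), dif_pos h]

lemma embFun_w (u v w : α) (e : Fin n → α) (x : Fin (n+1+2)) (h : n + 2 ≤ x.val) :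
    embFun u v w e x = w := by
  have hx := x.isLt
  rw [embFun, dif_neg (by omega), dif_neg (by omega), dif_pos h]

lemma embFun_e (u v w : α) (e : Fin n → α) (x : Fin (n+1+2)) (h1 : 2 ≤ x.val)
    (h2 : x.val ≤ n + 1) :
    embFun u v w e x = e ⟨x.val - 2, by omega⟩ := by
  rw [embFun, dif_neg (by omega), dif_neg (by omega), dif_neg (by omega)]

lemma embFun_inj (u v w : α) (e : Fin n → α)
    (he : Function.Injective e)
    (huv : u ≠ v) (huw : u ≠ w) (hvw : v ≠ w)
    (hue : ∀ t, u ≠ e t) (hve : ∀ t, v ≠ e t) (hwe : ∀ t, w ≠ e t) :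
    Function.Injective (embFun u v w e) := by
  intro x y hxy
  have hx := x.isLt
  have hy := y.isLt
  rcases Nat.lt_or_ge x.val 2 with hx2 | hx2 <;>
  rcases Nat.lt_or_ge y.val 2 with hy2 | hy2
  · interval_cases hxv : x.val <;> interval_cases hyv : y.val
    · exact Fin.ext (by omega)
    · rw [embFun_0 u v w e x hxv, embFun_1 u v w e y hyv] at hxy; exact absurd hxy huv
    · rw [embFun_1 u v w e x hxv, embFun_0 u v w e y hyv] at hxy; exact absurd hxy.symm huv
    · exact Fin.ext (by omega)
  · rcases Nat.lt_or_ge y.val (n+2) with hy3 | hy3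
    · rw [embFun_e u v w e y hy2 (by omega)] at hxy
      interval_cases hxv : x.val
      · rw [embFun_0 u v w e x hxv] at hxy; exact absurd hxy (hue _)
      · rw [embFun_1 u v w e x hxv] at hxy; exact absurd hxy (hve _)
    · rw [embFun_w u v w e y hy3] at hxy
      interval_cases hxv : x.val
      · rw [embFun_0 u v w e x hxv] at hxy; exact absurd hxy huw
      · rw [embFun_1 u v w e x hxv] at hxy; exact absurd hxy hvw
  · rcases Nat.lt_or_ge x.val (n+2) with hx3 | hx3
    · rw [embFun_e u v w e x hx2 (by omega)] at hxy
      interval_cases hyv : y.val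
      · rw [embFun_0 u v w e y hyv] at hxy; exact absurd hxy.symm (hue _)
      · rw [embFun_1 u v w e y hyv] at hxy; exact absurd hxy.symm (hve _)
    · rw [embFun_w u v w e x hx3] at hxy
      interval_cases hyv : y.val
      · rw [embFun_0 u v w e y hyv] at hxy; exact absurd hxy.symm huw
      · rw [embFun_1 u v w e y hyv] at hxy; exact absurd hxy.symm hvw
  · rcases Nat.lt_or_ge x.val (n+2) with hx3 | hx3 <;>
    rcases Nat.lt_or_ge y.val (n+2) with hy3 | hy3
    · rw [embFun_e u v w e x hx2 (by omega), embFun_e u v w e y hy2 (by omega)] at hxy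
      have h' := he hxy
      have : x.val - 2 = y.val - 2 := congrArg Fin.val h'
      exact Fin.ext (by omega)
    · rw [embFun_e u v w e x hx2 (by omega), embFun_w u v w e y hy3] at hxy
      exact absurd hxy.symm (hwe _)
    · rw [embFun_w u v w e x hx3, embFun_e u v w e y hy2 (by omega)] at hxy
      exact absurd hxy (hwe _)
    · exact Fin.ext (by omega)

lemma copy_lemma (c : Sym2 (Fin (k*n+3)) → Fin k) (i : Fin k)
    (u v w : Fin (k*n+3)) (L : Finset (Fin (k*n+3)))
    (hL : L.card = n) (hLsub : L ⊆ nbr c i u) (hv : v ∈ nbr c i u)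
    (hw : w ∈ nbr c i v) (hwu : w ≠ u) (hvL : v ∉ L) (hwL : w ∉ L) :
    HasMonoCopy (doubleStar n 1) c := by
  set e : Fin n → Fin (k*n+3) := fun t => L.orderEmbOfFin hL t with he_def
  have he : Function.Injective e := fun a b hab => (L.orderEmbOfFin hL).injective hab
  have heL : ∀ t, e t ∈ L := fun t => L.orderEmbOfFin_mem hL t
  have huL : u ∉ L := fun h => not_mem_nbr_self (hLsub h)
  have huv : u ≠ v := (mem_nbr.mp hv).1.symm
  have hvw : v ≠ w := (mem_nbr.mp hw).1.symm
  have hue : ∀ t, u ≠ e t := fun t h => huL (h ▸ heL t)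
  have hve : ∀ t, v ≠ e t := fun t h => hvL (h ▸ heL t)
  have hwe : ∀ t, w ≠ e t := fun t h => hwL (h ▸ heL t)
  have hinj := embFun_inj u v w e he huv hwu.symm hvw hue hve hwe
  refine ⟨⟨embFun u v w e, hinj⟩, i, ?_⟩
  have core : ∀ x y : Fin (n+1+2),
      ((x.val = 0 ∧ y.val = 1) ∨ (x.val = 0 ∧ 2 ≤ y.val ∧ y.val ≤ n + 1) ∨
        (x.val = 1 ∧ n + 2 ≤ y.val)) →
      c s(embFun u v w e x, embFun u v w e y) = i := by
    rintro x y (⟨h1, h2⟩ | ⟨h1, h2, h3⟩ | ⟨h1, h2⟩)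
    · rw [embFun_0 u v w e x h1, embFun_1 u v w e y h2]
      exact (mem_nbr.mp hv).2
    · rw [embFun_0 u v w e x h1, embFun_e u v w e y h2 h3]
      exact (mem_nbr.mp (hLsub (heL _))).2
    · rw [embFun_1 u v w e x h1, embFun_w u v w e y h2]
      exact (mem_nbr.mp hw).2
  intro x y hadj
  rw [doubleStar, SimpleGraph.fromRel_adj] at hadj
  obtain ⟨-, hrel | hrel⟩ := hadj
  · exact core x y hrel
  · rw [Sym2.eq_swap]
    exact core y x hrel

end DS9

namespace DS9

open Finset SimpleGraph

variable {n k : ℕ}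

lemma closure (c : Sym2 (Fin (k*n+3)) → Fin k)
    (hno : ¬ HasMonoCopy (doubleStar n 1) c) {i : Fin k} {u v : Fin (k*n+3)}
    (hu : n+1 ≤ (nbr c i u).card) (hv : v ∈ nbr c i u) :
    nbr c i v ⊆ insert u (nbr c i u) := by
  intro w hw
  by_contra hwn
  rw [Finset.mem_insert] at hwn
  push_neg at hwn
  obtain ⟨hwu, hwnbr⟩ := hwn
  obtain ⟨L, hLsub, hLcard⟩ := Finset.exists_subset_card_eq (s := (nbr c i u).erase v) (n := n)
    (by rw [Finset.card_erase_of_mem hv]; omega)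
  refine hno (copy_lemma c i u v w L hLcard (hLsub.trans (Finset.erase_subset _ _)) hv hw hwu
    ?_ ?_)
  · intro hvL
    exact (Finset.mem_erase.mp (hLsub hvL)).1 rfl
  · intro hwL
    exact hwnbr (Finset.erase_subset _ _ (hLsub hwL))

lemma pendant (c : Sym2 (Fin (k*n+3)) → Fin k)
    (hno : ¬ HasMonoCopy (doubleStar n 1) c) {i : Fin k} {u v : Fin (k*n+3)}
    (hu : n+2 ≤ (nbr c i u).card) (hv : v ∈ nbr c i u) :
    nbr c i v = {u} := by
  apply Finset.Subset.antisymm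
  · intro w hw
    rw [Finset.mem_singleton]
    by_contra hwu
    have hwin : w ∈ insert u (nbr c i u) := closure c hno (by omega) hv hw
    have hwnbr : w ∈ nbr c i u := by
      rcases Finset.mem_insert.mp hwin with h | h
      · exact absurd h hwu
      · exact h
    have hwv : w ≠ v := (mem_nbr.mp hw).1
    obtain ⟨L, hLsub, hLcard⟩ := Finset.exists_subset_card_eq
      (s := ((nbr c i u).erase v).erase w) (n := n)
      (by
        rw [Finset.card_erase_of_mem (Finset.mem_erase.mpr ⟨hwv, hwnbr⟩),
          Finset.card_erase_of_mem hv]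
        omega)
    refine hno (copy_lemma c i u v w L hLcard
      (hLsub.trans ((Finset.erase_subset _ _).trans (Finset.erase_subset _ _))) hv hw hwu ?_ ?_)
    · intro hvL
      exact (Finset.mem_erase.mp (Finset.erase_subset _ _ (hLsub hvL))).1 rfl
    · intro hwL
      exact (Finset.mem_erase.mp (hLsub hwL)).1 rfl
  · intro z hz
    rw [Finset.mem_singleton] at hz
    subst hz
    exact nbr_comm hv

lemma pigeon (c : Sym2 (Fin (k*n+3)) → Fin k) (hk : 3 ≤ k) (hn : (k-1)*(k-2) ≤ n)
    {i : Fin k} {v : Fin (k*n+3)} (h1 : (nbr c i v).card = 1) :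
    ∃ j, j ≠ i ∧ n+k-1 ≤ (nbr c j v).card := by
  by_contra hcon
  push_neg at hcon
  have hsum := sum_deg c v
  have hsplit : (nbr c i v).card + ∑ j ∈ univ.erase i, (nbr c j v).card = k*n+2 :=
    (Finset.add_sum_erase univ (fun j => (nbr c j v).card) (mem_univ i)).trans hsum
  have hbound : ∑ j ∈ univ.erase i, (nbr c j v).card ≤ (k-1) * (n+k-2) := by
    have := Finset.sum_le_card_nsmul (univ.erase i) (fun j => (nbr c j v).card) (n+k-2)
      (by
        intro j hj
        have hji : j ≠ i := (Finset.mem_erase.mp hj).1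
        have h2 := hcon j hji
        show (nbr c j v).card ≤ n+k-2
        omega)
    rwa [Finset.card_erase_of_mem (mem_univ i), Finset.card_univ, Fintype.card_fin,
      smul_eq_mul] at this
  obtain ⟨K, rfl⟩ : ∃ K, k = K+3 := ⟨k-3, by omega⟩
  have hn' : K*K + 3*K + 2 ≤ n := by
    have he : (K+3-1) * (K+3-2) = K*K + 3*K + 2 := by
      have e1 : K+3-1 = K+2 := by omega
      have e2 : K+3-2 = K+1 := by omega
      rw [e1, e2]; ring
    omega
  have he2 : (K+3-1) * (n+(K+3)-2) = (K+2)*n + (K*K + 3*K + 2) := by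
    have e1 : K+3-1 = K+2 := by omega
    have e2 : n+(K+3)-2 = n+K+1 := by omega
    rw [e1, e2]; ring
  have hkn : (K+3)*n = (K+2)*n + n := by ring
  omega

lemma deg_le (c : Sym2 (Fin (k*n+3)) → Fin k)
    (hno : ¬ HasMonoCopy (doubleStar n 1) c) (hk : 3 ≤ k) (hn : (k-1)*(k-2) ≤ n)
    (i : Fin k) (u : Fin (k*n+3)) : (nbr c i u).card ≤ n+1 := by
  by_contra hbig
  push_neg at hbig
  have hiu : n+2 ≤ (nbr c i u).card := hbig
  obtain ⟨v, hv⟩ := Finset.card_pos.mp (by omega : 0 < (nbr c i u).card)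
  have hvpend : nbr c i v = {u} := pendant c hno hiu hv
  have h1 : (nbr c i v).card = 1 := by rw [hvpend]; simp
  obtain ⟨j, hji, hjcard⟩ := pigeon c hk hn h1
  have hjv2 : n+2 ≤ (nbr c j v).card := by omega
  set X := nbr c j v with hX
  have hpendX : ∀ w ∈ X, (nbr c j w) = {v} := fun w hw => pendant c hno hjv2 hw
  have hchoice : ∀ w : Fin (k*n+3), ∃ s, w ∈ X → (s ≠ j ∧ n+k-1 ≤ (nbr c s w).card) := by
    intro w
    by_cases hw : w ∈ X
    · have h1w : (nbr c j w).card = 1 := by rw [hpendX w hw]; simp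
      obtain ⟨s, hs1, hs2⟩ := pigeon c hk hn h1w
      exact ⟨s, fun _ => ⟨hs1, hs2⟩⟩
    · exact ⟨j, fun h => absurd h hw⟩
  choose σ hσ using hchoice
  set T : Fin (k*n+3) → Finset (Fin (k*n+3)) := fun w => insert w (nbr c (σ w) w) with hT
  have hTcard : ∀ w ∈ X, n+k ≤ (T w).card := by
    intro w hw
    rw [hT]
    simp only
    rw [Finset.card_insert_of_notMem not_mem_nbr_self]
    have := (hσ w hw).2
    omega
  -- per fixed color class the stars are disjoint
  have hdisj : ∀ c' : Fin k, ∀ w ∈ X.filter (fun w => σ w = c'),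
      ∀ w' ∈ X.filter (fun w => σ w = c'), w ≠ w' → Disjoint (T w) (T w') := by
    intro c' w hw w' hw' hww
    obtain ⟨hwX, hwc⟩ := Finset.mem_filter.mp hw
    obtain ⟨hw'X, hw'c⟩ := Finset.mem_filter.mp hw'
    have hdw : n+k-1 ≤ (nbr c c' w).card := by rw [← hwc]; exact (hσ w hwX).2
    have hdw' : n+k-1 ≤ (nbr c c' w').card := by rw [← hw'c]; exact (hσ w' hw'X).2
    have hdw2 : n+2 ≤ (nbr c c' w).card := by omega
    have hdw'2 : n+2 ≤ (nbr c c' w').card := by omega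
    rw [Finset.disjoint_left]
    intro z hz hz'
    rw [hT] at hz hz'
    simp only at hz hz'
    rw [hwc] at hz
    rw [hw'c] at hz'
    rcases Finset.mem_insert.mp hz with hzw | hznb
    · subst hzw
      rcases Finset.mem_insert.mp hz' with h | h
      · exact hww h
      · have := pendant c hno hdw'2 h
        rw [this] at hdw
        simp at hdw
        omega
    · rcases Finset.mem_insert.mp hz' with hzw' | hznb'
      · subst hzw'
        have := pendant c hno hdw2 hznb
        rw [this] at hdw'
        simp at hdw'
        omega
      · have e1 := pendant c hno hdw2 hznb
        have e2 := pendant c hno hdw'2 hznb'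
        rw [e1] at e2
        exact hww (Finset.singleton_inj.mp e2)
  have hper : ∀ c' : Fin k, (X.filter (fun w => σ w = c')).card * (n+k) ≤ k*n+3 := by
    intro c'
    have hbi := Finset.card_biUnion (s := X.filter (fun w => σ w = c')) (t := T)
      (fun w hw w' hw' hne => hdisj c' w hw w' hw' hne)
    have hlow := Finset.card_nsmul_le_sum (X.filter (fun w => σ w = c'))
      (fun w => (T w).card) (n+k)
      (fun w hw => hTcard w (Finset.mem_filter.mp hw).1)
    have hup : ((X.filter (fun w => σ w = c')).biUnion T).card ≤ k*n+3 := by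
      have h := Finset.card_le_univ ((X.filter (fun w => σ w = c')).biUnion T)
      rwa [Fintype.card_fin] at h
    rw [smul_eq_mul] at hlow
    omega
  have hfib : X.card = ∑ c' ∈ univ.erase j, (X.filter (fun w => σ w = c')).card := by
    apply Finset.card_eq_sum_card_fiberwise
    intro w hw
    exact Finset.mem_erase.mpr ⟨(hσ w hw).1, mem_univ _⟩
  have htot : X.card * (n+k) ≤ (k-1) * (k*n+3) := by
    rw [hfib, Finset.sum_mul]
    have := Finset.sum_le_card_nsmul (univ.erase j)
      (fun c' => (X.filter (fun w => σ w = c')).card * (n+k)) (k*n+3)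
      (fun c' _ => hper c')
    rwa [Finset.card_erase_of_mem (mem_univ j), Finset.card_univ, Fintype.card_fin,
      smul_eq_mul] at this
  have hXlow : n+k-1 ≤ X.card := hjcard
  have hfin : (n+k-1) * (n+k) ≤ (k-1) * (k*n+3) :=
    le_trans (Nat.mul_le_mul_right _ hXlow) htot
  obtain ⟨K, rfl⟩ : ∃ K, k = K+3 := ⟨k-3, by omega⟩
  have hn' : K*K + 3*K + 2 ≤ n := by
    have e1 : K+3-1 = K+2 := by omega
    have e2 : K+3-2 = K+1 := by omega
    rw [e1, e2] at hn
    nlinarith [hn]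
  have key : n*(K*K + 3*K + 2) ≤ n*n := Nat.mul_le_mul_left n hn'
  have e1 : n+(K+3)-1 = n+K+2 := by omega
  rw [e1] at hfin
  have e2 : K+3-1 = K+2 := by omega
  rw [e2] at hfin
  nlinarith [hfin, key, hn']

end DS9

namespace DS9

open Finset SimpleGraph

variable {n k : ℕ}

def bset (c : Sym2 (Fin (k*n+3)) → Fin k) (u : Fin (k*n+3)) : Finset (Fin k) :=
  univ.filter (fun i => (nbr c i u).card = n+1)

lemma mem_bset {c : Sym2 (Fin (k*n+3)) → Fin k} {u : Fin (k*n+3)} {i : Fin k} :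
    i ∈ bset c u ↔ (nbr c i u).card = n+1 := by simp [bset]

lemma two_le_b (c : Sym2 (Fin (k*n+3)) → Fin k)
    (hno : ¬ HasMonoCopy (doubleStar n 1) c) (hk : 3 ≤ k) (hn : (k-1)*(k-2) ≤ n)
    (u : Fin (k*n+3)) : 2 ≤ (bset c u).card := by
  have hsum := sum_deg c u
  have hle : ∀ i ∈ (univ : Finset (Fin k)),
      (nbr c i u).card ≤ n + (if i ∈ bset c u then 1 else 0) := by
    intro i _
    by_cases hi : i ∈ bset c u
    · rw [if_pos hi]
      rw [mem_bset] at hi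
      omega
    · rw [if_neg hi]
      rw [mem_bset] at hi
      have := deg_le c hno hk hn i u
      omega
  have hmain := Finset.sum_le_sum hle
  rw [hsum] at hmain
  rw [Finset.sum_add_distrib] at hmain
  rw [Finset.sum_const, Finset.card_univ, Fintype.card_fin, smul_eq_mul] at hmain
  rw [Finset.sum_ite_mem, Finset.univ_inter, Finset.sum_const, smul_eq_mul, mul_one] at hmain
  omega

lemma b_le (c : Sym2 (Fin (k*n+3)) → Fin k) (hk : 3 ≤ k)
    (u : Fin (k*n+3)) : (bset c u).card ≤ k - 1 := by
  have h1 : ∑ i ∈ bset c u, (nbr c i u).card = (bset c u).card * (n+1) :=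
    Finset.sum_const_nat (fun i hi => mem_bset.mp hi)
  have h2 : ∑ i ∈ bset c u, (nbr c i u).card ≤ k*n+2 := by
    rw [← sum_deg c u]
    exact Finset.sum_le_sum_of_subset (Finset.subset_univ _)
  by_contra hb
  push_neg at hb
  have hbk : k ≤ (bset c u).card := by omega
  have h3 : k * (n+1) ≤ (bset c u).card * (n+1) := Nat.mul_le_mul_right _ hbk
  have h4 : k * (n+1) = k*n + k := by ring
  omega

lemma light_bound (c : Sym2 (Fin (k*n+3)) → Fin k)
    (hno : ¬ HasMonoCopy (doubleStar n 1) c) (hk : 3 ≤ k) (hn : (k-1)*(k-2) ≤ n)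
    {u : Fin (k*n+3)} {a : Fin k} (ha : (nbr c a u).card ≠ n+1) :
    n+2 ≤ (nbr c a u).card + (bset c u).card := by
  have hsum := sum_deg c u
  have hsplit : (nbr c a u).card + ∑ i ∈ univ.erase a, (nbr c i u).card = k*n+2 :=
    (Finset.add_sum_erase univ (fun i => (nbr c i u).card) (mem_univ a)).trans hsum
  have hanotb : a ∉ bset c u := fun h => ha (mem_bset.mp h)
  have hle : ∀ i ∈ univ.erase a,
      (nbr c i u).card ≤ n + (if i ∈ bset c u then 1 else 0) := by
    intro i _
    by_cases hi : i ∈ bset c u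
    · rw [if_pos hi]; rw [mem_bset] at hi; omega
    · rw [if_neg hi]; rw [mem_bset] at hi
      have := deg_le c hno hk hn i u
      omega
  have hmain := Finset.sum_le_sum hle
  rw [Finset.sum_add_distrib] at hmain
  rw [Finset.sum_const, Finset.card_erase_of_mem (mem_univ a), Finset.card_univ,
    Fintype.card_fin, smul_eq_mul] at hmain
  have hinter : (univ.erase a) ∩ bset c u = bset c u := by
    ext i
    constructor
    · intro h; exact (Finset.mem_inter.mp h).2
    · intro h
      refine Finset.mem_inter.mpr ⟨Finset.mem_erase.mpr ⟨?_, mem_univ i⟩, h⟩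
      intro he; subst he; exact hanotb h
  rw [Finset.sum_ite_mem, hinter, Finset.sum_const, smul_eq_mul, mul_one] at hmain
  have hkn : (k-1)*n + n = k*n := by
    have h : k-1+1 = k := by omega
    calc (k-1)*n + n = ((k-1)+1)*n := by ring
    _ = k*n := by rw [h]
  omega

end DS9

namespace DS9

open Finset SimpleGraph

variable {n k : ℕ}

def Cx (c : Sym2 (Fin (k*n+3)) → Fin k) (b : Fin k) (x : Fin (k*n+3)) :
    Finset (Fin (k*n+3)) := insert x (nbr c b x)

lemma card_Cx {c : Sym2 (Fin (k*n+3)) → Fin k} {b : Fin k} {x : Fin (k*n+3)}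
    (hx : (nbr c b x).card = n+1) : (Cx c b x).card = n+2 := by
  rw [Cx, Finset.card_insert_of_notMem not_mem_nbr_self, hx]

lemma nbr_subset_Cx (c : Sym2 (Fin (k*n+3)) → Fin k)
    (hno : ¬ HasMonoCopy (doubleStar n 1) c) {b : Fin k} {x : Fin (k*n+3)}
    (hx : (nbr c b x).card = n+1) {y : Fin (k*n+3)} (hy : y ∈ Cx c b x) :
    nbr c b y ⊆ Cx c b x := by
  rcases Finset.mem_insert.mp hy with h | h
  · subst h; exact Finset.subset_insert _ _
  · exact closure c hno (by omega) h

lemma Cx_eq (c : Sym2 (Fin (k*n+3)) → Fin k)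
    (hno : ¬ HasMonoCopy (doubleStar n 1) c) {b : Fin k} {x x' : Fin (k*n+3)}
    (hx : (nbr c b x).card = n+1) (hx' : (nbr c b x').card = n+1)
    (hmem : x' ∈ Cx c b x) : Cx c b x' = Cx c b x := by
  apply Finset.eq_of_subset_of_card_le
  · rw [Cx]
    apply Finset.insert_subset hmem
    exact nbr_subset_Cx c hno hx hmem
  · rw [card_Cx hx, card_Cx hx']

lemma Cx_disj (c : Sym2 (Fin (k*n+3)) → Fin k)
    (hno : ¬ HasMonoCopy (doubleStar n 1) c) {b : Fin k} {x x' : Fin (k*n+3)}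
    (hx : (nbr c b x).card = n+1)
    (hnmem : x' ∉ Cx c b x) : Disjoint (Cx c b x) (Cx c b x') := by
  rw [Finset.disjoint_left]
  intro z hz hz'
  have hzx' : z ≠ x' := fun h => hnmem (h ▸ hz)
  have hz'n : z ∈ nbr c b x' := by
    rcases Finset.mem_insert.mp hz' with h | h
    · exact absurd h hzx'
    · exact h
  exact hnmem (nbr_subset_Cx c hno hx hz (nbr_comm hz'n))

def compsOf (c : Sym2 (Fin (k*n+3)) → Fin k) (b : Fin k) : Finset (Finset (Fin (k*n+3))) :=
  (univ.filter (fun x => (nbr c b x).card = n+1)).image (fun x => Cx c b x)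

lemma compsOf_disj (c : Sym2 (Fin (k*n+3)) → Fin k)
    (hno : ¬ HasMonoCopy (doubleStar n 1) c) (b : Fin k) :
    ∀ D1 ∈ compsOf c b, ∀ D2 ∈ compsOf c b, D1 ≠ D2 → Disjoint D1 D2 := by
  intro D1 hD1 D2 hD2 hne
  obtain ⟨x1, hx1mem, rfl⟩ := Finset.mem_image.mp hD1
  obtain ⟨x2, hx2mem, rfl⟩ := Finset.mem_image.mp hD2
  have hx1 : (nbr c b x1).card = n+1 := (Finset.mem_filter.mp hx1mem).2
  have hx2 : (nbr c b x2).card = n+1 := (Finset.mem_filter.mp hx2mem).2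
  by_cases hmem : x2 ∈ Cx c b x1
  · exact absurd (Cx_eq c hno hx1 hx2 hmem).symm hne
  · exact Cx_disj c hno hx1 hmem

lemma card_Sb (c : Sym2 (Fin (k*n+3)) → Fin k)
    (hno : ¬ HasMonoCopy (doubleStar n 1) c) (b : Fin k) :
    ((compsOf c b).biUnion (fun D => D)).card = (compsOf c b).card * (n+2) := by
  rw [Finset.card_biUnion (compsOf_disj c hno b)]
  apply Finset.sum_const_nat
  intro D hD
  obtain ⟨x, hxmem, rfl⟩ := Finset.mem_image.mp hD
  exact card_Cx (Finset.mem_filter.mp hxmem).2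

lemma m_le (c : Sym2 (Fin (k*n+3)) → Fin k)
    (hno : ¬ HasMonoCopy (doubleStar n 1) c) (hk : 3 ≤ k) (hn : (k-1)*(k-2) ≤ n)
    (b : Fin k) : (compsOf c b).card ≤ k-2 := by
  set m := (compsOf c b).card with hm
  set Sb := (compsOf c b).biUnion (fun D => D) with hSbdef
  have hSbcard : Sb.card = m * (n+2) := card_Sb c hno b
  obtain ⟨K, rfl⟩ : ∃ K, k = K+3 := ⟨k-3, by omega⟩
  have hn' : K*K + 3*K + 2 ≤ n := by
    have e1 : K+3-1 = K+2 := by omega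
    have e2 : K+3-2 = K+1 := by omega
    rw [e1, e2] at hn
    nlinarith [hn]
  by_cases hSb : Sb = univ
  · exfalso
    have h1 : m * (n+2) = (K+3)*n+3 := by
      rw [← hSbcard, hSb, Finset.card_univ, Fintype.card_fin]
    have hklt : (K+3)*n+3 < (K+3)*(n+2) := by
      have he : (K+3)*(n+2) = (K+3)*n + 2*(K+3) := by ring
      omega
    have hmlt : m < K+3 := by
      have h5 : m * (n+2) < (K+3) * (n+2) := by rw [h1]; exact hklt
      exact lt_of_mul_lt_mul_right h5 (Nat.zero_le _)
    have h2 : m * (n+2) ≤ (K+2)*(n+2) := Nat.mul_le_mul_right _ (by omega)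
    have h3 : (K+2)*(n+2) < (K+3)*n+3 := by
      have he : (K+2)*(n+2) = (K+2)*n + 2*K+4 := by ring
      have he2 : (K+3)*n = (K+2)*n + n := by ring
      omega
    omega
  · obtain ⟨u, hu⟩ : ∃ u, u ∉ Sb := by
      by_contra h
      push_neg at h
      exact hSb (Finset.eq_univ_iff_forall.mpr h)
    have hustrong : (nbr c b u).card ≠ n+1 := by
      intro h
      apply hu
      apply Finset.mem_biUnion.mpr
      refine ⟨Cx c b u, ?_, Finset.mem_insert_self _ _⟩
      exact Finset.mem_image.mpr ⟨u, Finset.mem_filter.mpr ⟨mem_univ u, h⟩, rfl⟩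
    have hdisjnbr : ∀ v ∈ nbr c b u, v ∉ Sb := by
      intro v hv hvSb
      obtain ⟨D, hD, hvD⟩ := Finset.mem_biUnion.mp hvSb
      obtain ⟨x, hxmem, rfl⟩ := Finset.mem_image.mp hD
      have hx : (nbr c b x).card = n+1 := (Finset.mem_filter.mp hxmem).2
      have husub : u ∈ Cx c b x := nbr_subset_Cx c hno hx hvD (nbr_comm hv)
      exact hu (Finset.mem_biUnion.mpr ⟨Cx c b x, hD, husub⟩)
    -- disjoint union of (insert u nbr) and Sb fits in univ
    have hdisj2 : Disjoint (insert u (nbr c b u)) Sb := by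
      rw [Finset.disjoint_left]
      intro z hz hzSb
      rcases Finset.mem_insert.mp hz with h | h
      · subst h; exact hu hzSb
      · exact hdisjnbr z h hzSb
    have hcard0 : (insert u (nbr c b u)).card = 1 + (nbr c b u).card := by
      rw [Finset.card_insert_of_notMem not_mem_nbr_self]
      omega
    have hunion : (insert u (nbr c b u)).card + Sb.card ≤ (K+3)*n+3 := by
      rw [← Finset.card_union_of_disjoint hdisj2]
      have h := Finset.card_le_univ ((insert u (nbr c b u)) ∪ Sb)
      rwa [Fintype.card_fin] at h
    have hlight := light_bound c hno hk hn hustrong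
    have hble := b_le c hk u
    have hdeg : n+3 ≤ (nbr c b u).card + (K+3) := by
      have e1 : K+3-1 = K+2 := by omega
      rw [e1] at hble
      omega
    by_contra hcon
    push_neg at hcon
    have hmge : K+2 ≤ m := by omega
    have h4 : (K+2)*(n+2) ≤ m*(n+2) := Nat.mul_le_mul_right _ hmge
    have he : (K+2)*(n+2) = (K+2)*n + 2*K+4 := by ring
    have he2 : (K+3)*n = (K+2)*n + n := by ring
    omega


open Finset SimpleGraph

variable {n k : ℕ}

set_option maxHeartbeats 2000000 in
lemma no_copy_false (c : Sym2 (Fin (k*n+3)) → Fin k) (hk : 3 ≤ k)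
    (hn : (k-1)*(k-2) ≤ n) (hno : ¬ HasMonoCopy (doubleStar n 1) c) : False := by
  classical
  -- a vertex and a strong color at it
  have hV : (0:ℕ) < k*n+3 := by omega
  set u₀ : Fin (k*n+3) := ⟨0, hV⟩ with hu₀
  have hb2 := two_le_b c hno hk hn u₀
  obtain ⟨a, ha⟩ : ∃ a, a ∈ bset c u₀ := by
    have : (bset c u₀).Nonempty := Finset.card_pos.mp (by omega)
    exact this
  have hA : (nbr c a u₀).card = n+1 := mem_bset.mp ha
  set C := Cx c a u₀ with hC
  have hCcard : C.card = n+2 := card_Cx hA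
  have hCsub : ∀ x ∈ C, nbr c a x ⊆ C := fun x hx => nbr_subset_Cx c hno hA hx
  have hstrong_int : ∀ x ∈ C, (nbr c a x).card = n+1 → ∀ y ∈ C, y ≠ x → y ∈ nbr c a x := by
    intro x hx hxs y hy hyx
    have h1 : nbr c a x ⊆ C.erase x := by
      intro z hz
      exact Finset.mem_erase.mpr ⟨(mem_nbr.mp hz).1, hCsub x hx hz⟩
    have h2 : nbr c a x = C.erase x := by
      apply Finset.eq_of_subset_of_card_le h1
      rw [Finset.card_erase_of_mem hx, hCcard, hxs]
      omega
    rw [h2]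
    exact Finset.mem_erase.mpr ⟨hyx, hy⟩
  -- the arrows
  set strongNA : Fin (k*n+3) → Finset (Fin k) := fun x => (bset c x).erase a with hsNA
  set Arr : Finset (Fin (k*n+3) × Fin k) :=
    C.biUnion (fun x => (strongNA x).image (fun b => (x, b))) with hArr
  have mem_Arr : ∀ p : Fin (k*n+3) × Fin k,
      p ∈ Arr ↔ p.1 ∈ C ∧ p.2 ≠ a ∧ (nbr c p.2 p.1).card = n+1 := by
    intro p
    constructor
    · intro h
      obtain ⟨x, hx, h2⟩ := Finset.mem_biUnion.mp h
      obtain ⟨b, hb, hbp⟩ := Finset.mem_image.mp h2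
      obtain ⟨hba, hbs⟩ := Finset.mem_erase.mp hb
      subst hbp
      exact ⟨hx, hba, mem_bset.mp hbs⟩
    · rintro ⟨h1, h2, h3⟩
      exact Finset.mem_biUnion.mpr ⟨p.1, h1, Finset.mem_image.mpr
        ⟨p.2, Finset.mem_erase.mpr ⟨h2, mem_bset.mpr h3⟩, rfl⟩⟩
  have card_Arr : Arr.card = ∑ x ∈ C, (strongNA x).card := by
    rw [hArr, Finset.card_biUnion]
    · apply Finset.sum_congr rfl
      intro x _
      exact Finset.card_image_of_injective _ (fun b1 b2 h => (Prod.mk.injEq _ _ _ _).mp h |>.2)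
    · intro x _ y _ hxy
      show Disjoint _ _
      rw [Finset.disjoint_left]
      rintro p hp hp'
      obtain ⟨b, _, hbp⟩ := Finset.mem_image.mp hp
      obtain ⟨b', _, hbp'⟩ := Finset.mem_image.mp hp'
      apply hxy
      have e1 : x = p.1 := congrArg Prod.fst hbp
      have e2 : y = p.1 := congrArg Prod.fst hbp'
      exact e1.trans e2.symm
  set Φ : Fin (k*n+3) × Fin k → Fin k × Finset (Fin (k*n+3)) :=
    fun p => (p.2, Cx c p.2 p.1) with hΦ
  -- collision lemma
  have hcollide : ∀ p q : Fin (k*n+3) × Fin k, p ∈ Arr → q ∈ Arr → Φ p = Φ q →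
      p.1 ≠ q.1 → (c s(p.1, q.1) = p.2 ∧ ¬ (nbr c a p.1).card = n+1) := by
    intro p q hp hq hφ hne
    obtain ⟨hpC, hpa, hps⟩ := (mem_Arr p).mp hp
    obtain ⟨hqC, hqa, hqs⟩ := (mem_Arr q).mp hq
    have hCeq : Cx c p.2 p.1 = Cx c q.2 q.1 := congrArg Prod.snd hφ
    have hq1 : q.1 ∈ Cx c p.2 p.1 := by
      rw [hCeq]
      exact Finset.mem_insert_self _ _
    have hq1n : q.1 ∈ nbr c p.2 p.1 := by
      rcases Finset.mem_insert.mp hq1 with h | h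
      · exact absurd h hne.symm
      · exact h
    have hcol : c s(p.1, q.1) = p.2 := (mem_nbr.mp hq1n).2
    refine ⟨hcol, ?_⟩
    intro hstr
    have hyn := hstrong_int p.1 hpC hstr q.1 hqC hne.symm
    have hca : c s(p.1, q.1) = a := (mem_nbr.mp hyn).2
    exact hpa (by rw [← hcol, hca])
  -- the set of potential collision edges
  set E : Finset (Fin (k*n+3) × Fin (k*n+3)) :=
    (C ×ˢ C).filter (fun e => e.1 < e.2 ∧ ¬ c s(e.1, e.2) = a ∧
      ¬ (nbr c a e.2).card = n+1) with hE
  set EpF : Fin k × Finset (Fin (k*n+3)) → Finset (Fin (k*n+3) × Fin (k*n+3)) :=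
    fun p => E.filter (fun e => (e.1, p.1) ∈ Arr ∧ (e.2, p.1) ∈ Arr ∧
      Φ (e.1, p.1) = p ∧ Φ (e.2, p.1) = p) with hEpF
  -- fiber bound
  have hfiber : ∀ p, (Arr.filter (fun q => Φ q = p)).card ≤ 1 + (EpF p).card := by
    intro p
    set F := (Arr.filter (fun q => Φ q = p)).image Prod.fst with hF
    have hsnd : ∀ q ∈ Arr.filter (fun q => Φ q = p), q.2 = p.1 := by
      intro q hq
      exact congrArg Prod.fst ((Finset.mem_filter.mp hq).2)
    have hFcard : F.card = (Arr.filter (fun q => Φ q = p)).card := by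
      apply Finset.card_image_of_injOn
      intro q1 h1 q2 h2 hq
      exact Prod.ext hq ((hsnd q1 h1).trans (hsnd q2 h2).symm)
    have hFmem : ∀ x ∈ F, (x, p.1) ∈ Arr ∧ Φ (x, p.1) = p := by
      intro x hx
      obtain ⟨q, hq, rfl⟩ := Finset.mem_image.mp hx
      have hpe : (q.1, p.1) = q := Prod.ext rfl (hsnd q hq).symm
      rw [hpe]
      exact ⟨(Finset.mem_filter.mp hq).1, (Finset.mem_filter.mp hq).2⟩
    rcases Finset.eq_empty_or_nonempty F with hFe | hFne
    · rw [← hFcard, hFe]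
      simp
    · have hx₀F : F.min' hFne ∈ F := Finset.min'_mem F hFne
      set x₀ := F.min' hFne with hx₀
      have hinj : (F.erase x₀).card ≤ (EpF p).card := by
        apply Finset.card_le_card_of_injOn (fun x => (x₀, x))
        · intro x hx
          have hxF : x ∈ F := Finset.mem_of_mem_erase hx
          have hlt : x₀ < x := Finset.min'_lt_of_mem_erase_min' F hFne hx
          obtain ⟨hxA, hxφ⟩ := hFmem x hxF
          obtain ⟨hx₀A, hx₀φ⟩ := hFmem x₀ hx₀F
          have hneq : x ≠ x₀ := (Finset.mem_erase.mp hx).1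
          have hcol1 : c s(x₀, x) = p.1 ∧ ¬ (nbr c a x₀).card = n+1 :=
            hcollide (x₀, p.1) (x, p.1) hx₀A hxA (hx₀φ.trans hxφ.symm) hneq.symm
          have hcol2 : c s(x, x₀) = p.1 ∧ ¬ (nbr c a x).card = n+1 :=
            hcollide (x, p.1) (x₀, p.1) hxA hx₀A (hxφ.trans hx₀φ.symm) hneq
          have hx₀C : x₀ ∈ C := ((mem_Arr _).mp hx₀A).1
          have hxC : x ∈ C := ((mem_Arr _).mp hxA).1
          have hp1a : p.1 ≠ a := ((mem_Arr _).mp hxA).2.1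
          have hEmem : (x₀, x) ∈ E := by
            rw [hE]
            refine Finset.mem_filter.mpr ⟨Finset.mem_product.mpr ⟨hx₀C, hxC⟩, hlt, ?_, ?_⟩
            · show ¬ c s(x₀, x) = a
              rw [hcol1.1]
              exact hp1a
            · exact hcol2.2
          rw [hEpF]
          exact Finset.mem_filter.mpr ⟨hEmem, hx₀A, hxA, hx₀φ, hxφ⟩
        · intro x hx y hy hxy
          exact congrArg Prod.snd hxy
      have hposF : 1 ≤ F.card := Finset.card_pos.mpr hFne
      have hcerase : (F.erase x₀).card = F.card - 1 := Finset.card_erase_of_mem hx₀F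
      omega
  -- disjointness of collision-edge families
  have hdisjE : ∀ p ∈ Arr.image Φ, ∀ p' ∈ Arr.image Φ, p ≠ p' → Disjoint (EpF p) (EpF p') := by
    intro p _ p' _ hne
    rw [Finset.disjoint_left]
    intro e he he'
    rw [hEpF] at he he'
    obtain ⟨heE, h1, h2, hφ1, hφ2⟩ := Finset.mem_filter.mp he
    obtain ⟨_, h1', h2', hφ1', hφ2'⟩ := Finset.mem_filter.mp he'
    by_cases hcc : p.1 = p'.1
    · apply hne
      rw [← hφ1]
      rw [hcc]
      exact hφ1'
    · have helt : e.1 < e.2 := by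
        rw [hE] at heE
        exact (Finset.mem_filter.mp heE).2.1
      have he1ne2 : e.1 ≠ e.2 := ne_of_lt helt
      have hc1 := (hcollide (e.1, p.1) (e.2, p.1) h1 h2 (hφ1.trans hφ2.symm) he1ne2).1
      have hc1' := (hcollide (e.1, p'.1) (e.2, p'.1) h1' h2' (hφ1'.trans hφ2'.symm) he1ne2).1
      exact hcc (hc1.symm.trans hc1')
  have hsumE : ∑ p ∈ Arr.image Φ, (EpF p).card ≤ E.card := by
    rw [← Finset.card_biUnion hdisjE]
    apply Finset.card_le_card
    apply Finset.biUnion_subset.mpr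
    intro p _
    rw [hEpF]
    exact Finset.filter_subset _ _
  -- main inequality 1
  have hfinal1 : Arr.card ≤ (Arr.image Φ).card + E.card := by
    have h0 := Finset.card_eq_sum_card_image Φ Arr
    have h1 : ∑ p ∈ Arr.image Φ, (Arr.filter (fun q => Φ q = p)).card ≤
        ∑ p ∈ Arr.image Φ, (1 + (EpF p).card) :=
      Finset.sum_le_sum (fun p _ => hfiber p)
    rw [Finset.sum_add_distrib, Finset.sum_const, smul_eq_mul, mul_one] at h1
    omega
  -- bound on the image
  have himg : (Arr.image Φ).card ≤ (k-1)*(k-2) := by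
    have hsub : Arr.image Φ ⊆ (univ.erase a).biUnion
        (fun b => (compsOf c b).image (fun D => (b, D))) := by
      intro p hp
      obtain ⟨q, hq, rfl⟩ := Finset.mem_image.mp hp
      obtain ⟨hqC, hqa, hqs⟩ := (mem_Arr q).mp hq
      exact Finset.mem_biUnion.mpr ⟨q.2, Finset.mem_erase.mpr ⟨hqa, mem_univ _⟩,
        Finset.mem_image.mpr ⟨Cx c q.2 q.1,
          Finset.mem_image.mpr ⟨q.1, Finset.mem_filter.mpr ⟨mem_univ _, hqs⟩, rfl⟩, rfl⟩⟩
    have h1 := Finset.card_le_card hsub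
    have h2 := Finset.card_biUnion_le (s := univ.erase a)
      (t := fun b => (compsOf c b).image (fun D => (b, D)))
    have h3 : ∀ b ∈ univ.erase a, ((compsOf c b).image (fun D => (b, D))).card ≤ k-2 :=
      fun b _ => le_trans Finset.card_image_le (m_le c hno hk hn b)
    have h4 := Finset.sum_le_card_nsmul (univ.erase a)
      (fun b => ((compsOf c b).image (fun D => (b, D))).card) (k-2) h3
    rw [Finset.card_erase_of_mem (mem_univ a), Finset.card_univ, Fintype.card_fin,
      smul_eq_mul] at h4
    omega
  -- bound on E
  have hEbound : E.card ≤ ∑ x ∈ C,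
      (if (nbr c a x).card = n+1 then 0 else (n+1) - (nbr c a x).card) := by
    have hfib2 : E.card = ∑ y ∈ C, (E.filter (fun e => e.2 = y)).card := by
      apply Finset.card_eq_sum_card_fiberwise
      intro e he
      rw [hE] at he
      exact (Finset.mem_product.mp (Finset.mem_filter.mp he).1).2
    rw [hfib2]
    apply Finset.sum_le_sum
    intro y hy
    by_cases hys : (nbr c a y).card = n+1
    · rw [if_pos hys]
      have hempty : E.filter (fun e => e.2 = y) = ∅ := by
        apply Finset.filter_eq_empty_iff.mpr
        intro e he hey
        rw [hE] at he
        have := (Finset.mem_filter.mp he).2.2.2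
        rw [hey] at this
        exact this hys
      rw [hempty]
      simp
    · rw [if_neg hys]
      have hinj2 : (E.filter (fun e => e.2 = y)).card ≤
          ((C.erase y).filter (fun x => ¬ c s(x, y) = a)).card := by
        apply Finset.card_le_card_of_injOn (fun e => e.1)
        · intro e he
          obtain ⟨heE, hey⟩ := Finset.mem_filter.mp he
          rw [hE] at heE
          have heP := (Finset.mem_filter.mp heE).1
          obtain ⟨hlt, hca, -⟩ := (Finset.mem_filter.mp heE).2
          have he1C : e.1 ∈ C := (Finset.mem_product.mp heP).1
          refine Finset.mem_filter.mpr ⟨Finset.mem_erase.mpr ⟨?_, he1C⟩, ?_⟩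
          · rw [← hey]
            exact ne_of_lt hlt
          · rw [← hey]
            exact hca
        · intro e1 h1 e2 h2 h12
          have hy1 : e1.2 = y := (Finset.mem_filter.mp h1).2
          have hy2 : e2.2 = y := (Finset.mem_filter.mp h2).2
          exact Prod.ext h12 (hy1.trans hy2.symm)
      have htarget : ((C.erase y).filter (fun x => ¬ c s(x, y) = a)).card =
          (n+1) - (nbr c a y).card := by
        have hsplit := Finset.card_filter_add_card_filter_not
          (s := C.erase y) (p := fun x => c s(x, y) = a)
        have hec : (C.erase y).card = n+1 := by
          rw [Finset.card_erase_of_mem hy, hCcard]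
          omega
        have hpos : (C.erase y).filter (fun x => c s(x, y) = a) = nbr c a y := by
          ext z
          constructor
          · intro hz
            obtain ⟨hz1, hz2⟩ := Finset.mem_filter.mp hz
            obtain ⟨hzy, hzC⟩ := Finset.mem_erase.mp hz1
            refine mem_nbr.mpr ⟨hzy, ?_⟩
            rw [Sym2.eq_swap]
            exact hz2
          · intro hz
            obtain ⟨hzy, hzc⟩ := mem_nbr.mp hz
            refine Finset.mem_filter.mpr ⟨Finset.mem_erase.mpr ⟨hzy, hCsub y hy hz⟩, ?_⟩
            rw [Sym2.eq_swap]
            exact hzc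
        rw [hpos, hec] at hsplit
        omega
      omega
  -- pointwise lower bound for arrows
  have hptwise : ∀ x ∈ C,
      1 + (if (nbr c a x).card = n+1 then 0 else (n+1) - (nbr c a x).card) ≤
      (strongNA x).card := by
    intro x _
    by_cases hxs : (nbr c a x).card = n+1
    · rw [if_pos hxs]
      have hb2x := two_le_b c hno hk hn x
      simp only [hsNA]
      by_cases hax : a ∈ bset c x
      · rw [Finset.card_erase_of_mem hax]
        omega
      · rw [Finset.erase_eq_of_notMem hax]
        omega
    · rw [if_neg hxs]
      have hlight := light_bound c hno hk hn (u := x) (a := a) hxs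
      have hax : a ∉ bset c x := fun h => hxs (mem_bset.mp h)
      simp only [hsNA]
      rw [Finset.erase_eq_of_notMem hax]
      have hdle := deg_le c hno hk hn a x
      omega
  have hlowArr : (n+2) + (∑ x ∈ C,
      (if (nbr c a x).card = n+1 then 0 else (n+1) - (nbr c a x).card)) ≤ Arr.card := by
    rw [card_Arr]
    have h1 : ∑ x ∈ C, (1 + (if (nbr c a x).card = n+1 then 0
        else (n+1) - (nbr c a x).card)) ≤ ∑ x ∈ C, (strongNA x).card :=
      Finset.sum_le_sum hptwise
    rw [Finset.sum_add_distrib, Finset.sum_const, smul_eq_mul, mul_one, hCcard] at h1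
    exact h1
  -- contradiction
  have hfin : n+2 ≤ (k-1)*(k-2) := by omega
  omega

lemma isRamsey_doubleStar (n k : ℕ) (hk : 3 ≤ k) (hn : (k-1)*(k-2) ≤ n) :
    IsRamsey (doubleStar n 1) k (k*n+3) := by
  intro c
  by_contra hno
  exact no_copy_false c hk hn hno

end DS9

/-- If `k ≥ 3` and `n ≥ (k−1)(k−2)`, then `r(S(n,1); k) ≤ kn + 3`. -/
theorem stmt_9 (n k : ℕ) (hk : 3 ≤ k) (hn : (k - 1) * (k - 2) ≤ n) :
    ramseyNumber (doubleStar n 1) k ≤ k * n + 3 := by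
  apply Nat.sInf_le
  exact DS9.isRamsey_doubleStar n k hk hn
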